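/- There exists a finite set H = {φ¹, φ²} of constructive, base-independent (uniform) reductions such that the atomic Split rule p → q ∨ r / (p → q) ∨ (p → r) is logically valid in miP-tV relative to H: for every base B, every extension C ⊇ B, every reduction set J, and every closed argument ⟨D₁, J⟩ for p → q ∨ r valid on C, the structure obtained by appending the Split inference below D₁, paired with J ∪ H, is valid on C. -/

import Mathlib

/-- Propositional atoms: `⊥` and countably many atoms `p n`. -/
inductive PAtom : Type
  | bot
  | p (n : ℕ)
deriving DecidableEq

/-- Formulas of the propositional language. -/
inductive Formula : Type
  | atom (a : PAtom)
  | and (A B : Formula)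
  | or (A B : Formula)
  | imp (A B : Formula)
deriving DecidableEq

/-- Atomic rules (level ≤ 1): a list of atomic premises and an atomic conclusion.
An axiom (level-0 rule) is `⟨[], a⟩`. -/
structure ARule where
  prems : List PAtom
  concl : PAtom
deriving DecidableEq

/-- The atomic explosion rules: from `⊥` infer any atom. -/
def AE : Set ARule := { r | ∃ a, r = ⟨[PAtom.bot], a⟩ }

/-- An atomic base is a set of atomic rules containing atomic explosion. -/
def IsBase (B : Set ARule) : Prop := AE ⊆ B

/-- Argument structures: natural-deduction-style trees with arbitrary inference
steps. `hyp A` is an assumption; `node c prems` is an inference to conclusion `c`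
from the listed premise subtrees, where each premise comes with a list of
assumption-formulas it discharges in that subtree. An axiom is `node c []`. -/
inductive Arg : Type
  | hyp (A : Formula)
  | node (concl : Formula) (prems : List (List Formula × Arg))

/-- Conclusion of an argument structure. -/
def Arg.concl : Arg → Formula
  | .hyp A => A
  | .node c _ => c

mutual
/-- The (open, i.e. undischarged) assumption-formulas of an argument structure. -/
def Arg.assumptions : Arg → Finset Formula
  | .hyp A => {A}
  | .node _ prems => assumptionsList prems

def assumptionsList : List (List Formula × Arg) → Finset Formula
  | [] => ∅
  | pr :: rest => (Arg.assumptions pr.2 \ pr.1.toFinset) ∪ assumptionsList rest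
end

mutual
/-- Substitution of argument structures for the open assumptions of an argument
structure; `bound` records the assumption-formulas discharged above. -/
def Arg.subst (σ : Formula → Arg) (bound : Finset Formula) : Arg → Arg
  | .hyp A => if A ∈ bound then .hyp A else σ A
  | .node c prems => .node c (substList σ bound prems)

def substList (σ : Formula → Arg) (bound : Finset Formula) :
    List (List Formula × Arg) → List (List Formula × Arg)
  | [] => []
  | pr :: rest => (pr.1, Arg.subst σ (bound ∪ pr.1.toFinset) pr.2) :: substList σ bound rest
end

/-- `AtomDeriv B D` : the argument structure `D` is an atomic derivation of the
base `B` (every node is an application of a rule of `B`). -/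
inductive AtomDeriv (B : Set ARule) : Arg → Prop
  | app (r : ARule) (hr : r ∈ B) (subs : List Arg)
      (hc : subs.map Arg.concl = r.prems.map Formula.atom)
      (hs : ∀ D ∈ subs, AtomDeriv B D) :
      AtomDeriv B (.node (.atom r.concl) (subs.map (fun D => ([], D))))

/-- A reduction is a partial function on argument structures. -/
abbrev Red := Arg → Option Arg

/-- One-step reduction relative to a set of reductions `J`: apply some `φ ∈ J` to
some substructure. -/
inductive Step (J : Set Red) : Arg → Arg → Prop
  | red {φ : Red} {D D' : Arg} : φ ∈ J → φ D = some D' → Step J D D'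
  | congr {c : Formula} {pre post : List (List Formula × Arg)} {ds : List Formula}
      {D D' : Arg} : Step J D D' →
      Step J (.node c (pre ++ (ds, D) :: post)) (.node c (pre ++ (ds, D') :: post))

/-- `D` reduces to `D'` relative to `J` (reflexive-transitive closure). -/
def Reduces (J : Set Red) : Arg → Arg → Prop := Relation.ReflTransGen (Step J)

/-- Validity of closed arguments `⟨D, J⟩` on a base `B`, by recursion on the
conclusion: a closed argument with atomic conclusion must reduce to an atomic
derivation of the base; one with compound conclusion must reduce to a canonical
(introduction-ended) closed structure whose immediate substructures are valid
(for `→`, valid as an open argument: under every extension of the reduction set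
and of the base, substitution of valid closed arguments for the discharged
assumption yields a valid closed argument). -/
def CValid : Formula → Set ARule → Set Red → Arg → Prop
  | .atom a, B, J, D => ∃ D', Reduces J D D' ∧ AtomDeriv B D' ∧ D'.concl = .atom a
  | .and A C, B, J, D => ∃ D1 D2 : Arg,
      Reduces J D (.node (A.and C) [([], D1), ([], D2)]) ∧
      D1.assumptions = ∅ ∧ D2.assumptions = ∅ ∧ D1.concl = A ∧ D2.concl = C ∧
      CValid A B J D1 ∧ CValid C B J D2
  | .or A C, B, J, D =>
      (∃ D1 : Arg, Reduces J D (.node (A.or C) [([], D1)]) ∧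
        D1.assumptions = ∅ ∧ D1.concl = A ∧ CValid A B J D1) ∨
      (∃ D1 : Arg, Reduces J D (.node (A.or C) [([], D1)]) ∧
        D1.assumptions = ∅ ∧ D1.concl = C ∧ CValid C B J D1)
  | .imp A C, B, J, D => ∃ D1 : Arg,
      Reduces J D (.node (A.imp C) [([A], D1)]) ∧
      D1.assumptions ⊆ {A} ∧ D1.concl = C ∧
      ∀ H : Set Red, J ⊆ H → ∀ X : Set ARule, B ⊆ X → ∀ E : Arg,
        E.assumptions = ∅ → E.concl = A → CValid A X H E →
        CValid C X H (Arg.subst (fun _ => E) ∅ D1)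

/-- Validity of an argument `⟨D, J⟩` on a base `B` (Prawitz, monotonic
introduction-based form): closed arguments as in `CValid`; an open argument is
valid iff for every extension `H ⊇ J` of the reduction set, every extension
`X ⊇ B` of the base, and every assignment of closed arguments valid on `X`
(w.r.t. `H`) to its open assumptions, the resulting closed instance is valid
on `X` w.r.t. `H`. -/
def Valid (B : Set ARule) (D : Arg) (J : Set Red) : Prop :=
  if D.assumptions = ∅ then CValid D.concl B J D
  else ∀ (σ : Formula → Arg) (H : Set Red) (X : Set ARule), J ⊆ H → B ⊆ X →
    (∀ A ∈ D.assumptions, (σ A).assumptions = ∅ ∧ (σ A).concl = A ∧ CValid A X H (σ A)) →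
    CValid D.concl X H (Arg.subst σ ∅ D)

/-- Logical validity: validity on every atomic base. -/
def LValid (D : Arg) (J : Set Red) : Prop :=
  ∀ B : Set ARule, IsBase B → Valid B D J

/-- miP-tV consequence over a base: `Γ ⊨_B A` iff there is an argument `⟨D, J⟩`
valid on `B` with `D` an argument structure from `Γ` to `A`. -/
def EntailsOn (B : Set ARule) (Γ : Finset Formula) (A : Formula) : Prop :=
  ∃ (D : Arg) (J : Set Red), D.assumptions = Γ ∧ D.concl = A ∧ Valid B D J

/-- miP-tV logical consequence: `Γ ⊨ A` iff there is a logically valid argument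
`⟨D, J⟩` with `D` from `Γ` to `A`. -/
def Entails (Γ : Finset Formula) (A : Formula) : Prop :=
  ∃ (D : Arg) (J : Set Red), D.assumptions = Γ ∧ D.concl = A ∧ LValid D J

section Aux
open Relation

lemma step_mono {J K : Set Red} (h : J ⊆ K) {D D' : Arg} (s : Step J D D') : Step K D D' := by
  induction s with
  | red hφ he => exact Step.red (h hφ) he
  | congr _ ih => exact Step.congr ih

lemma reduces_mono {J K : Set Red} (h : J ⊆ K) {D D' : Arg} (s : Reduces J D D') :
    Reduces K D D' := ReflTransGen.mono (fun _ _ => step_mono h) _ _ s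

lemma reduces_congr {J : Set Red} {D D' : Arg} (h : Reduces J D D')
    (c : Formula) (pre post : List (List Formula × Arg)) (ds : List Formula) :
    Reduces J (.node c (pre ++ (ds, D) :: post)) (.node c (pre ++ (ds, D') :: post)) := by
  induction h with
  | refl => exact ReflTransGen.refl
  | tail _ s ih => exact ReflTransGen.tail ih (Step.congr s)

lemma reduces_in1 {J : Set Red} {D D' : Arg} (h : Reduces J D D')
    (c : Formula) (ds : List Formula) :
    Reduces J (.node c [(ds, D)]) (.node c [(ds, D')]) :=
  reduces_congr h c [] [] ds

lemma assumptionsList_nilmap (l : List Arg) (h : ∀ D ∈ l, Arg.assumptions D = ∅) :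
    assumptionsList (l.map fun D => (([] : List Formula), D)) = ∅ := by
  induction l with
  | nil => simp [assumptionsList]
  | cons a t ih =>
    simp only [List.map_cons, assumptionsList]
    rw [h a (by simp), ih (fun D hD => h D (by simp [hD]))]
    simp

lemma atomDeriv_closed {B : Set ARule} {D : Arg} (h : AtomDeriv B D) :
    D.assumptions = ∅ := by
  induction h with
  | app r hr subs hc hs ih =>
    simp only [Arg.assumptions]
    exact assumptionsList_nilmap subs ih
end Aux
section Aux2
open Relation

mutual
/-- Replace every axiom node `⟨a, []⟩` by the hypothesis `a`. -/
def unsub (a : Formula) : Arg → Arg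
  | .hyp A => .hyp A
  | .node c [] => if c = a then .hyp a else .node c []
  | .node c (pr :: rest) => .node c (unsubList a (pr :: rest))

def unsubList (a : Formula) : List (List Formula × Arg) → List (List Formula × Arg)
  | [] => []
  | pr :: rest => (pr.1, unsub a pr.2) :: unsubList a rest
end

lemma unsub_concl (a : Formula) (D : Arg) : (unsub a D).concl = D.concl := by
  match D with
  | .hyp A => rfl
  | .node c [] =>
    by_cases h : c = a
    · simp [unsub, h, Arg.concl]
    · simp [unsub, h, Arg.concl]
  | .node c (pr :: rest) => rfl

lemma unsub_node (a c : Formula) (prems : List (List Formula × Arg))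
    (h : ¬(c = a ∧ prems = [])) :
    unsub a (.node c prems) = .node c (unsubList a prems) := by
  match prems with
  | [] =>
    have hc : ¬ c = a := fun hca => h ⟨hca, rfl⟩
    simp [unsub, hc, unsubList]
  | pr :: rest => rfl

lemma substList_unsubList (σ : Formula → Arg) (a : Formula) (l : List Arg) :
    substList σ ∅ (unsubList a (l.map fun D => (([] : List Formula), D))) =
      (l.map fun D => Arg.subst σ ∅ (unsub a D)).map fun D => (([] : List Formula), D) := by
  induction l with
  | nil => simp [unsubList, substList]
  | cons x t ih =>
    simp only [List.map_cons, unsubList, substList, ih]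
    congr 2

lemma assumptionsList_nilmap_subset (s : Finset Formula) (l : List Arg)
    (h : ∀ D ∈ l, Arg.assumptions D ⊆ s) :
    assumptionsList (l.map fun D => (([] : List Formula), D)) ⊆ s := by
  induction l with
  | nil => simp [assumptionsList]
  | cons x t ih =>
    simp only [List.map_cons, assumptionsList, List.toFinset_nil, Finset.sdiff_empty]
    exact Finset.union_subset (h x (by simp)) (ih (fun D hD => h D (by simp [hD])))

lemma unsubList_nilmap (a : Formula) (l : List Arg) :
    unsubList a (l.map fun D => (([] : List Formula), D)) =
      (l.map (unsub a)).map fun D => (([] : List Formula), D) := by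
  induction l with
  | nil => simp [unsubList]
  | cons x t ih => simp only [List.map_cons, unsubList, ih]

lemma unsub_assumptions {B : Set ARule} {D : Arg} (h : AtomDeriv B D) (a : Formula) :
    (unsub a D).assumptions ⊆ {a} := by
  induction h with
  | app r hr subs hc hs ih =>
    by_cases hmatch : (Formula.atom r.concl) = a ∧ (subs.map fun D => (([]:List Formula), D)) = []
    · have : unsub a (.node (.atom r.concl) (subs.map fun D => (([]:List Formula), D))) = .hyp a := by
        rw [hmatch.2]; simp [unsub, hmatch.1]
      rw [this]
      simp [Arg.assumptions]
    · rw [unsub_node _ _ _ hmatch]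
      simp only [Arg.assumptions, unsubList_nilmap]
      exact assumptionsList_nilmap_subset _ _ (by
        intro D' hD'
        obtain ⟨D0, hD0, rfl⟩ := List.mem_map.mp hD'
        exact ih D0 hD0)
end Aux2
section Aux3
open Relation

lemma reduces_list_aux {H : Set Red} (c : Formula) {l l' : List Arg}
    (h : List.Forall₂ (Reduces H) l l') :
    ∀ pre : List (List Formula × Arg),
      Reduces H (.node c (pre ++ l.map fun D => (([] : List Formula), D)))
        (.node c (pre ++ l'.map fun D => (([] : List Formula), D))) := by
  induction h with
  | nil => intro pre; exact ReflTransGen.refl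
  | @cons a b t t' hab ht ih =>
    intro pre
    have h1 : Reduces H (.node c (pre ++ (([],a) :: t.map fun D => (([]:List Formula), D))))
        (.node c (pre ++ (([],b) :: t.map fun D => (([]:List Formula), D)))) :=
      reduces_congr hab c pre _ []
    have h2 := ih (pre ++ [([], b)])
    simp only [List.append_assoc, List.singleton_append] at h2
    simp only [List.map_cons]
    exact ReflTransGen.trans h1 h2

lemma reduces_list {H : Set Red} (c : Formula) {l l' : List Arg}
    (h : List.Forall₂ (Reduces H) l l') :
    Reduces H (.node c (l.map fun D => (([] : List Formula), D)))
      (.node c (l'.map fun D => (([] : List Formula), D))) := by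
  have := reduces_list_aux c h []
  simpa using this

lemma exists_list {H : Set Red} {X' : Set ARule} (f : Arg → Arg) (l : List Arg)
    (h : ∀ D ∈ l, ∃ D'', Reduces H (f D) D'' ∧ AtomDeriv X' D'' ∧ D''.concl = D.concl) :
    ∃ l'' : List Arg, List.Forall₂ (Reduces H) (l.map f) l'' ∧
      (∀ D ∈ l'', AtomDeriv X' D) ∧ l''.map Arg.concl = l.map Arg.concl := by
  induction l with
  | nil => exact ⟨[], List.Forall₂.nil, by simp, by simp⟩
  | cons x t ih =>
    obtain ⟨x'', hx1, hx2, hx3⟩ := h x (by simp)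
    obtain ⟨t'', ht1, ht2, ht3⟩ := ih (fun D hD => h D (by simp [hD]))
    exact ⟨x'' :: t'', List.Forall₂.cons hx1 ht1,
      by intro D hD; rcases List.mem_cons.mp hD with rfl|hD; exacts [hx2, ht2 D hD], by simp [hx3, ht3]⟩

/-- The main grafting lemma. -/
lemma graft {X X' : Set ARule} (hXX' : X ⊆ X') (P : PAtom)
    {H : Set Red} {E Dp : Arg} (hE : Reduces H E Dp) (hDp : AtomDeriv X' Dp)
    (hDpc : Dp.concl = .atom P) :
    ∀ {D : Arg}, AtomDeriv (X ∪ {⟨[], P⟩}) D →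
      ∃ D'', Reduces H (Arg.subst (fun _ => E) ∅ (unsub (.atom P) D)) D'' ∧
        AtomDeriv X' D'' ∧ D''.concl = D.concl := by
  intro D hD
  induction hD with
  | app r hr subs hc hs ih =>
    by_cases hmatch : (Formula.atom r.concl) = (Formula.atom P) ∧
        (subs.map fun D => (([]:List Formula), D)) = []
    · have h1 : unsub (.atom P) (.node (.atom r.concl) (subs.map fun D => (([]:List Formula), D)))
          = .hyp (.atom P) := by
        rw [hmatch.2]; simp [unsub, hmatch.1]
      rw [h1]
      refine ⟨Dp, ?_, hDp, ?_⟩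
      · simpa [Arg.subst] using hE
      · rw [hDpc, Arg.concl]
        exact hmatch.1.symm
    · rw [unsub_node _ _ _ hmatch]
      simp only [Arg.subst, substList_unsubList]
      obtain ⟨subs'', h1, h2, h3⟩ :=
        exists_list (fun D => Arg.subst (fun _ => E) ∅ (unsub (.atom P) D)) subs ih
      refine ⟨.node (.atom r.concl) (subs''.map fun D => (([]:List Formula), D)),
        reduces_list _ h1, ?_, rfl⟩
      have hrX : r ∈ X' := by
        rcases hr with hr | hr
        · exact hXX' hr
        · exfalso
          apply hmatch
          rcases hr with rfl
          have hsubs : subs = [] := by cases subs with | nil => rfl | cons a t => simp at hc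
          exact ⟨rfl, by simp [hsubs]⟩
      exact AtomDeriv.app r hrX subs'' (by rw [h3, hc]) h2
end Aux3
section Main
open Relation

/-- φ¹ : close the discharged assumption of an `→`-introduction by the
corresponding axiom (vacuous discharge). -/
def phi1 : Red := fun D =>
  match D with
  | .node (Formula.imp A C) [(ds, D2)] =>
      if ds = [A] then
        some (.node (A.imp C) [([A], Arg.subst (fun _ => .node A []) ∅ D2)])
      else none
  | _ => none

/-- φ² : swap an `∨`-introduction over an atomic derivation with the
`→`-introduction below it, turning axioms back into discharged assumptions. -/
def phi2 : Red := fun D =>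
  match D with
  | .node (Formula.imp A _) [(ds, .node _ [(ds2, G)])] =>
      if ds = [A] ∧ ds2 = ([] : List Formula) then
        some (.node (A.imp G.concl) [([A], unsub A G)])
      else none
  | _ => none

lemma phi1_eval (A C : Formula) (D2 : Arg) :
    phi1 (.node (A.imp C) [([A], D2)]) =
      some (.node (A.imp C) [([A], Arg.subst (fun _ => .node A []) ∅ D2)]) := by
  simp [phi1]

lemma phi2_eval (A C O : Formula) (G : Arg) :
    phi2 (.node (A.imp C) [([A], .node O [([], G)])]) =
      some (.node (A.imp G.concl) [([A], unsub A G)]) := by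
  simp [phi2]

/-- there is a finite set `Hs = {φ¹, φ²}` of (uniform, constructive,
base-independent) reductions making the atomic Split rule logically valid in
miP-tV relative to `Hs`: for every base `B`, every extension `X ⊇ B`, every
reduction set `J` and every closed argument `⟨D₁, J⟩` for `p → q ∨ r` valid on
`X`, appending the Split inference below `D₁` and pairing with `J ∪ Hs` yields an
argument valid on `X`. -/
theorem atomic_split_uniform_reductions (np nq nr : ℕ)
    (hpq : np ≠ nq) (hpr : np ≠ nr) (hqr : nq ≠ nr) :
    ∃ Hs : Set Red, Hs.Finite ∧
      ∀ B : Set ARule, IsBase B → ∀ X : Set ARule, B ⊆ X → ∀ (J : Set Red) (D1 : Arg),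
        D1.assumptions = ∅ →
        D1.concl = (Formula.atom (PAtom.p np)).imp
          ((Formula.atom (PAtom.p nq)).or (Formula.atom (PAtom.p nr))) →
        Valid X D1 J →
        Valid X
          (Arg.node (((Formula.atom (PAtom.p np)).imp (Formula.atom (PAtom.p nq))).or
              ((Formula.atom (PAtom.p np)).imp (Formula.atom (PAtom.p nr))))
            [([], D1)])
          (J ∪ Hs) := by
  refine ⟨{phi1, phi2}, (Set.finite_singleton phi2).insert phi1, ?_⟩
  intro B hB X hBX J D1 hD1a hD1c hval
  set P : Formula := Formula.atom (PAtom.p np) with hP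
  set Q : Formula := Formula.atom (PAtom.p nq) with hQ
  set R : Formula := Formula.atom (PAtom.p nr) with hR
  set K : Set Red := J ∪ {phi1, phi2} with hK
  set Big : Formula := (P.imp Q).or (P.imp R) with hBig
  set E' : Arg := Arg.node Big [([], D1)] with hE'
  -- the hypothesis is a closed valid argument for P → (Q ∨ R)
  rw [Valid, if_pos hD1a, hD1c] at hval
  simp only [CValid] at hval
  obtain ⟨D2, hred, hD2a, hD2c, hprop⟩ := hval
  -- the axiom argument for P on the extended base
  set axr : ARule := ⟨[], PAtom.p np⟩ with haxr
  set Axp : Arg := Arg.node P [] with hAxp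
  have hAxpDeriv : AtomDeriv (X ∪ {axr}) Axp :=
    AtomDeriv.app axr (Or.inr rfl) [] rfl (by simp)
  have hAxpA : Axp.assumptions = ∅ := by simp [hAxp, Arg.assumptions, assumptionsList]
  have hAxpCV : CValid P (X ∪ {axr}) K Axp := by
    rw [hP]; simp only [CValid]
    exact ⟨Axp, ReflTransGen.refl, hAxpDeriv, rfl⟩
  have hsub := hprop K Set.subset_union_left (X ∪ {axr}) Set.subset_union_left
    Axp hAxpA rfl hAxpCV
  set D2' : Arg := Arg.subst (fun _ => Axp) ∅ D2 with hD2'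
  -- the generic treatment of either disjunct
  have main : ∀ (a0 : PAtom) (G Dq : Arg),
      Reduces K D2' (.node (Q.or R) [([], G)]) →
      Reduces K G Dq → AtomDeriv (X ∪ {axr}) Dq → Dq.concl = .atom a0 →
      ∃ D1' : Arg, Reduces K E' (.node Big [([], D1')]) ∧ D1'.assumptions = ∅ ∧
        D1'.concl = P.imp (.atom a0) ∧ CValid (P.imp (.atom a0)) X K D1' := by
    intro a0 G Dq hG1 hDq1 hDq2 hDq3
    set W : Arg := unsub P Dq with hW
    have hWa : W.assumptions ⊆ {P} := unsub_assumptions hDq2 P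
    have hWc : W.concl = .atom a0 := by rw [hW, unsub_concl, hDq3]
    set D1' : Arg := Arg.node (P.imp (.atom a0)) [([P], W)] with hD1'
    have hpath : Reduces K E' (.node Big [([], D1')]) := by
      have s1 : Reduces K E' (.node Big [([], .node (P.imp (Q.or R)) [([P], D2)])]) :=
        reduces_in1 (reduces_mono Set.subset_union_left hred) Big []
      have s2 : Step K (.node Big [([], .node (P.imp (Q.or R)) [([P], D2)])])
          (.node Big [([], .node (P.imp (Q.or R)) [([P], D2')])]) := by
        exact Step.congr (c := Big) (pre := []) (post := []) (ds := [])
          (Step.red (Set.mem_union_right _ (Set.mem_insert _ _)) (phi1_eval P (Q.or R) D2))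
      have s3 : Reduces K (.node Big [([], .node (P.imp (Q.or R)) [([P], D2')])])
          (.node Big [([], .node (P.imp (Q.or R)) [([P], .node (Q.or R) [([], Dq)])])]) := by
        refine reduces_in1 (reduces_in1 ?_ _ [P]) Big []
        exact ReflTransGen.trans hG1 (reduces_in1 hDq1 (Q.or R) [])
      have s4 : Step K (.node Big [([], .node (P.imp (Q.or R)) [([P], .node (Q.or R) [([], Dq)])])])
          (.node Big [([], D1')]) := by
        refine Step.congr (c := Big) (pre := []) (post := []) (ds := [])
          (Step.red (Set.mem_union_right _ (Set.mem_insert_of_mem _ rfl)) ?_)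
        rw [hD1', ← hDq3]
        exact phi2_eval P (Q.or R) (Q.or R) Dq
      exact ReflTransGen.tail (ReflTransGen.trans (ReflTransGen.tail s1 s2) s3) s4
    have hD1'a : D1'.assumptions = ∅ := by
      rw [hD1']
      simp only [Arg.assumptions, assumptionsList]
      rw [Finset.sdiff_eq_empty_iff_subset.mpr (by simpa using hWa)]
      simp
    refine ⟨D1', hpath, hD1'a, rfl, ?_⟩
    simp only [CValid]
    refine ⟨W, ReflTransGen.refl, hWa, hWc, ?_⟩
    intro H hKH X' hXX' E hEa hEc hEcv
    obtain ⟨Dp, hp1, hp2, hp3⟩ := hEcv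
    obtain ⟨D'', hr, had, hcc⟩ := graft hXX' (PAtom.p np) hp1 hp2 hp3 hDq2
    exact ⟨D'', hr, had, by rw [hcc, hDq3]⟩
  -- the goal
  have hEa' : E'.assumptions = ∅ := by
    simp [hE', Arg.assumptions, assumptionsList, hD1a]
  rw [Valid, if_pos hEa']
  have hconcl : E'.concl = Big := rfl
  rw [hconcl, hBig]
  simp only [CValid] at hsub ⊢
  rcases hsub with ⟨G, hG1, hG2, hG3, hG4⟩ | ⟨G, hG1, hG2, hG3, hG4⟩
  · obtain ⟨Dq, hDq1, hDq2, hDq3⟩ := hG4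
    obtain ⟨D1', h1, h2, h3, h4⟩ := main (PAtom.p nq) G Dq hG1 hDq1 hDq2 hDq3
    exact Or.inl ⟨D1', h1, h2, h3, h4⟩
  · obtain ⟨Dq, hDq1, hDq2, hDq3⟩ := hG4
    obtain ⟨D1', h1, h2, h3, h4⟩ := main (PAtom.p nr) G Dq hG1 hDq1 hDq2 hDq3
    exact Or.inr ⟨D1', h1, h2, h3, h4⟩
end Main
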